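/- Let $(X_t)$ be a Markov chain on a finite state space $V$ with transition probabilities $p$, and fix a target state $v$ with $X_0 \ne v$. Define $H_v(t) = \prod_{i=0}^{t}(1 - p(X_i,v))$ (with $H_v(-1)=1$), let $r_v$ be a stopping time, and define $\xi^v_s = \mathbf{1}\{T_v > s\wedge r_v\}/H_v(s\wedge r_v - 1)$, where $T_v$ is the hitting time of $v$. Then $(\xi^v_s)_{s\ge 0}$ is a martingale with respect to the natural filtration of $(X_t)$. -/

import Mathlib

open Finset

open scoped Classical in
/-- The process `ξ^v_s = 1{T_v > s ∧ r_v} / H_v(s ∧ r_v - 1)`, evaluated on a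
trajectory `ω`, where `H_v(t) = ∏_{i=0}^t (1 - p(ω_i, v))` (so the product below
over `range m` is `H_v(m-1)`, with `H_v(-1) = 1`). -/
noncomputable def xiProc {V : Type*} [Fintype V]
    (p : V → V → ℝ) (v : V) (r : (ℕ → V) → ℕ) (s : ℕ) (ω : ℕ → V) : ℝ :=
  (if ∀ t ≤ min s (r ω), ω t ≠ v then (1 : ℝ) else 0) /
    ∏ i ∈ Finset.range (min s (r ω)), (1 - p (ω i) v)

/-- `ξ^v_s` is a martingale for the natural filtration of the chain: for every
time `s` and every trajectory `ω` (with `ω 0 ≠ v`), the conditional expectation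
of `ξ^v_{s+1}` given the history `ω_0,…,ω_s` equals `ξ^v_s`.  Here `r` is an
arbitrary stopping time of the chain. -/
theorem xiProc_martingale {V : Type*} [Fintype V]
    (p : V → V → ℝ) (hp0 : ∀ u x : V, 0 ≤ p u x)
    (hp1 : ∀ u x : V, u ≠ x → p u x < 1)
    (hrow : ∀ u : V, ∑ x : V, p u x = 1)
    (v : V) (r : (ℕ → V) → ℕ)
    (hstop : ∀ (ω ω' : ℕ → V) (n : ℕ),
      (∀ i ≤ n, ω i = ω' i) → (r ω ≤ n ↔ r ω' ≤ n))
    (s : ℕ) (ω : ℕ → V) (hω0 : ω 0 ≠ v) :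
    ∑ y : V, p (ω s) y * xiProc p v r (s + 1) (Function.update ω (s + 1) y)
      = xiProc p v r s ω := by
  classical
  have hfix : ∀ (y : V) (i : ℕ), i ≤ s → Function.update ω (s + 1) y i = ω i := by
    intro y i hi
    exact Function.update_of_ne (by omega) _ _
  by_cases hr : r ω ≤ s
  · -- r ω ≤ s : each summand's xiProc equals xiProc p v r s ω
    have hreq : ∀ y : V, r (Function.update ω (s + 1) y) = r ω := by
      intro y
      set ω' := Function.update ω (s + 1) y with hω'
      have h1 : r ω' ≤ r ω := by
        have := hstop ω ω' (r ω) (fun i hi => (hfix y i (le_trans hi hr)).symm)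
        exact this.mp le_rfl
      have h2 : r ω ≤ r ω' := by
        have := hstop ω ω' (r ω') (fun i hi => (hfix y i (le_trans hi (le_trans h1 hr))).symm)
        exact this.mpr le_rfl
      omega
    have hxi : ∀ y : V, xiProc p v r (s + 1) (Function.update ω (s + 1) y)
        = xiProc p v r s ω := by
      intro y
      have hmin' : min (s + 1) (r (Function.update ω (s + 1) y)) = r ω := by
        rw [hreq y]; omega
      have hmin : min s (r ω) = r ω := by omega
      unfold xiProc
      rw [hmin', hmin]
      have hcond : (∀ t ≤ r ω, Function.update ω (s + 1) y t ≠ v)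
          ↔ (∀ t ≤ r ω, ω t ≠ v) := by
        constructor <;> intro h t ht <;>
          have := hfix y t (le_trans ht hr)
        · rw [← this]; exact h t ht
        · rw [this]; exact h t ht
      rw [if_congr hcond rfl rfl]
      congr 1
      apply Finset.prod_congr rfl
      intro i hi
      rw [hfix y i (le_trans (le_of_lt (Finset.mem_range.mp hi)) hr)]
    calc ∑ y : V, p (ω s) y * xiProc p v r (s + 1) (Function.update ω (s + 1) y)
        = ∑ y : V, p (ω s) y * xiProc p v r s ω := by
          exact Finset.sum_congr rfl (fun y _ => by rw [hxi y])
      _ = (∑ y : V, p (ω s) y) * xiProc p v r s ω := by rw [Finset.sum_mul]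
      _ = xiProc p v r s ω := by rw [hrow]; ring
  · -- r ω > s
    have hr' : ∀ y : V, ¬ r (Function.update ω (s + 1) y) ≤ s := by
      intro y
      have := hstop ω (Function.update ω (s + 1) y) s (fun i hi => (hfix y i hi).symm)
      exact fun h => hr (this.mpr h)
    have hmin : min s (r ω) = s := by omega
    have hmin' : ∀ y : V, min (s + 1) (r (Function.update ω (s + 1) y)) = s + 1 := by
      intro y; have := hr' y; omega
    set H := ∏ i ∈ Finset.range s, (1 - p (ω i) v) with hH
    have hxi : ∀ y : V, xiProc p v r (s + 1) (Function.update ω (s + 1) y)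
        = (if (∀ t ≤ s, ω t ≠ v) ∧ y ≠ v then (1 : ℝ) else 0) /
            (H * (1 - p (ω s) v)) := by
      intro y
      unfold xiProc
      rw [hmin' y]
      have hcond : (∀ t ≤ s + 1, Function.update ω (s + 1) y t ≠ v)
          ↔ ((∀ t ≤ s, ω t ≠ v) ∧ y ≠ v) := by
        constructor
        · intro h
          refine ⟨fun t ht => ?_, ?_⟩
          · have := h t (by omega); rwa [hfix y t ht] at this
          · have := h (s + 1) le_rfl; rwa [Function.update_self] at this
        · rintro ⟨h1, h2⟩ t ht
          rcases Nat.lt_or_ge t (s + 1) with h | h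
          · rw [hfix y t (by omega)]; exact h1 t (by omega)
          · have : t = s + 1 := by omega
            rw [this, Function.update_self]; exact h2
      rw [if_congr hcond rfl rfl]
      congr 1
      rw [Finset.prod_range_succ, hfix y s le_rfl]
      congr 1
      apply Finset.prod_congr rfl
      intro i hi
      rw [hfix y i (le_of_lt (Finset.mem_range.mp hi))]
    rw [Finset.sum_congr rfl (fun y _ => by rw [hxi y])]
    unfold xiProc
    rw [hmin]
    by_cases hA : ∀ t ≤ s, ω t ≠ v
    · have hps : ω s ≠ v := hA s le_rfl
      have hne : (1 : ℝ) - p (ω s) v ≠ 0 := by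
        have := hp1 (ω s) v hps; linarith
      have : ∑ y : V, p (ω s) y *
          ((if (∀ t ≤ s, ω t ≠ v) ∧ y ≠ v then (1 : ℝ) else 0) /
            (H * (1 - p (ω s) v)))
          = (∑ y : V, (if y = v then 0 else p (ω s) y)) / (H * (1 - p (ω s) v)) := by
        rw [Finset.sum_div]
        apply Finset.sum_congr rfl
        intro y _
        by_cases hy : y = v
        · simp [hy]
        · rw [if_pos ⟨hA, hy⟩, if_neg hy]
          ring
      rw [this]
      have hsum : ∑ y : V, (if y = v then (0:ℝ) else p (ω s) y)
          = 1 - p (ω s) v := by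
        have : ∑ y : V, (if y = v then (0:ℝ) else p (ω s) y)
            = ∑ y : V, (p (ω s) y - if y = v then p (ω s) y else 0) := by
          apply Finset.sum_congr rfl; intro y _; by_cases hy : y = v <;> simp [hy]
        rw [this, Finset.sum_sub_distrib, hrow, Finset.sum_ite_eq' Finset.univ v (p (ω s))]
        simp
      rw [hsum, if_pos hA]
      rcases eq_or_ne H 0 with h | h
      · rw [← hH, h]; simp
      · rw [← hH]; field_simp
    · rw [if_neg hA]
      simp [hA]
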